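/- For all real a and b, J₀(a)J₀(b) + 2∑_{q=1}^∞ (−1)^q J_{2q}(a)J_{2q}(b) = J₀(√(a² + b²)). -/

import Mathlib

open Real MeasureTheory

/-- Bessel function of the first kind of order `n`. -/
noncomputable def besselJ (n : ℕ) (x : ℝ) : ℝ :=
  ∑' m : ℕ, (-1 : ℝ) ^ m * (x / 2) ^ (2 * m + n) / (m.factorial * (m + n).factorial)

set_option maxHeartbeats 1000000

noncomputable section GrafAux

/-- Binomial coefficient with integer lower index, zero when out of range. -/
def Bc (n : ℕ) (q : ℤ) : ℝ := if 0 ≤ q then (n.choose q.toNat : ℝ) else 0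

lemma Bc_pascal (n : ℕ) (q : ℤ) : Bc (n + 1) q = Bc n (q - 1) + Bc n q := by
  rcases lt_trichotomy q 0 with h | h | h
  · simp [Bc, not_le.2 h, not_le.2 (by omega : q - 1 < 0)]; intro h'; omega
  · subst h; simp [Bc]
  · have h1 : (0:ℤ) ≤ q - 1 := by omega
    have h2 : q.toNat = (q - 1).toNat + 1 := by omega
    simp only [Bc, if_pos h.le, if_pos h1, h2]
    rw [Nat.choose_succ_succ]
    push_cast
    ring

lemma Bc_zero_of_neg {n : ℕ} {q : ℤ} (h : q < 0) : Bc n q = 0 := by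
  simp [Bc, not_le.2 h]

lemma Bc_zero_of_gt {n : ℕ} {q : ℤ} (h : (n : ℤ) < q) : Bc n q = 0 := by
  have h0 : (0:ℤ) ≤ q := le_trans (Int.natCast_nonneg n) h.le
  simp only [Bc, if_pos h0]
  rw [Nat.choose_eq_zero_of_lt (by omega)]
  simp

/-- sign (-1)^q as a real number -/
def sg (q : ℤ) : ℝ := ((q.negOnePow : ℤ) : ℝ)

lemma sg_add_one (q : ℤ) : sg (q + 1) = -sg q := by
  simp [sg, Int.negOnePow_add, mul_comm]

lemma sg_sub_one (q : ℤ) : sg (q - 1) = -sg q := by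
  simp [sg, Int.negOnePow_sub, mul_comm]

lemma sg_neg (q : ℤ) : sg (-q) = sg q := by simp [sg, Int.negOnePow_neg]

lemma sg_natCast (n : ℕ) : sg n = (-1 : ℝ) ^ n := by
  simp [sg, Int.coe_negOnePow_natCast]

/-- The central alternating binomial convolution. -/
def U (j k : ℕ) : ℝ := ∑' q : ℤ, sg q * (Bc (2 * j) (j + q) * Bc (2 * k) (k + q))

lemma U_support (j k : ℕ) {q : ℤ} (hq : q ∉ Finset.Icc (-(j:ℤ)) (j:ℤ)) :
    sg q * (Bc (2 * j) (j + q) * Bc (2 * k) (k + q)) = 0 := by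
  simp only [Finset.mem_Icc, not_and_or, not_le] at hq
  rcases hq with h | h
  · rw [Bc_zero_of_neg (by omega : (j:ℤ) + q < 0)]; ring
  · rw [Bc_zero_of_gt (by push_cast; omega : ((2*j : ℕ) : ℤ) < (j:ℤ) + q)]; ring

lemma summable_U (j k : ℕ) :
    Summable (fun q : ℤ => sg q * (Bc (2 * j) (j + q) * Bc (2 * k) (k + q))) :=
  summable_of_ne_finset_zero (fun _ hq => U_support j k hq)

lemma Bc_double (n : ℕ) (t : ℤ) :
    Bc (2 * n + 2) t = Bc (2 * n) (t - 2) + 2 * Bc (2 * n) (t - 1) + Bc (2 * n) t := by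
  rw [show 2 * n + 2 = (2 * n + 1) + 1 by ring, Bc_pascal, Bc_pascal,
    show t - 1 - 1 = t - 2 by ring, Bc_pascal]
  ring

lemma summable_shift (j k : ℕ) (c d : ℤ) :
    Summable (fun q : ℤ => sg q * (Bc (2 * j) (j + q + c) * Bc (2 * k) (k + q + d))) := by
  apply summable_of_ne_finset_zero (s := Finset.Icc (-(j:ℤ) - c) ((j:ℤ) - c))
  intro q hq
  simp only [Finset.mem_Icc, not_and_or, not_le] at hq
  rcases hq with h | h
  · rw [Bc_zero_of_neg (by omega)]; ring
  · rw [Bc_zero_of_gt (by push_cast; omega)]; ring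

lemma U_rec (j k : ℕ) : U (j + 1) k = 4 * U j k - U j (k + 1) := by
  have hsum0 := summable_shift j k 0 0
  simp only [add_zero] at hsum0
  have hsumA := summable_shift j k (-1) 0
  have hsumC := summable_shift j k 1 0
  simp only [add_zero] at hsumA hsumC
  have expand : (fun q : ℤ => sg q * (Bc (2 * (j+1)) ((j+1 : ℕ) + q) * Bc (2 * k) (k + q)))
      = fun q : ℤ => (sg q * (Bc (2*j) (j + q + -1) * Bc (2*k) (k + q))
          + 2 * (sg q * (Bc (2*j) (j + q) * Bc (2*k) (k + q))))
          + sg q * (Bc (2*j) (j + q + 1) * Bc (2*k) (k + q)) := by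
    funext q
    have : Bc (2 * (j+1)) ((j+1 : ℕ) + q) = Bc (2*j) (j + q + -1) + 2 * Bc (2*j) (j + q)
        + Bc (2*j) (j + q + 1) := by
      rw [show 2 * (j+1) = 2 * j + 2 by ring, Bc_double]
      push_cast
      ring_nf
    rw [this]; ring
  have hA : (∑' q : ℤ, sg q * (Bc (2*j) (j + q + -1) * Bc (2*k) (k + q)))
      = -∑' q : ℤ, sg q * (Bc (2*j) (j + q) * Bc (2*k) (k + q + 1)) := by
    rw [← (Equiv.addRight (1:ℤ)).tsum_eq
      (fun q => sg q * (Bc (2*j) (j + q + -1) * Bc (2*k) (k + q)))]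
    rw [← tsum_neg]
    congr 1; funext q
    simp only [Equiv.coe_addRight, sg_add_one]
    rw [show (j:ℤ) + (q + 1) + -1 = j + q by ring, show (k:ℤ) + (q+1) = k + q + 1 by ring]
    ring
  have hC : (∑' q : ℤ, sg q * (Bc (2*j) (j + q + 1) * Bc (2*k) (k + q)))
      = -∑' q : ℤ, sg q * (Bc (2*j) (j + q) * Bc (2*k) (k + q + -1)) := by
    rw [← (Equiv.addRight (-1:ℤ)).tsum_eq
      (fun q => sg q * (Bc (2*j) (j + q + 1) * Bc (2*k) (k + q)))]
    rw [← tsum_neg]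
    congr 1; funext q
    simp only [Equiv.coe_addRight]
    rw [show q + -1 = q - 1 from rfl, sg_sub_one,
      show (j:ℤ) + (q - 1) + 1 = j + q by ring, show (k:ℤ) + (q - 1) = k + q + -1 by ring]
    ring
  have key : ∀ q : ℤ, Bc (2*k) (k + q + 1) + Bc (2*k) (k + q + -1)
      = Bc (2 * (k+1)) ((k+1 : ℕ) + q) - 2 * Bc (2*k) (k + q) := by
    intro q
    rw [show 2 * (k+1) = 2 * k + 2 by ring, Bc_double]
    push_cast
    ring_nf
  calc U (j+1) k = ∑' q : ℤ, ((sg q * (Bc (2*j) (j + q + -1) * Bc (2*k) (k + q))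
          + 2 * (sg q * (Bc (2*j) (j + q) * Bc (2*k) (k + q))))
          + sg q * (Bc (2*j) (j + q + 1) * Bc (2*k) (k + q))) := by
        rw [U, expand]
    _ = ((∑' q : ℤ, sg q * (Bc (2*j) (j + q + -1) * Bc (2*k) (k + q)))
          + 2 * ∑' q : ℤ, sg q * (Bc (2*j) (j + q) * Bc (2*k) (k + q)))
          + ∑' q : ℤ, sg q * (Bc (2*j) (j + q + 1) * Bc (2*k) (k + q)) := by
        rw [Summable.tsum_add (Summable.add hsumA (hsum0.mul_left 2)) hsumC,
          Summable.tsum_add hsumA (hsum0.mul_left 2), tsum_mul_left]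
    _ = 2 * U j k - ∑' q : ℤ, (sg q * (Bc (2*j) (j + q) * Bc (2*k) (k + q + 1))
              + sg q * (Bc (2*j) (j + q) * Bc (2*k) (k + q + -1))) := by
        have h1 := summable_shift j k 0 1
        have h2 := summable_shift j k 0 (-1)
        simp only [add_zero] at h1 h2
        rw [hA, hC, Summable.tsum_add h1 h2, U]
        ring
    _ = 4 * U j k - U j (k+1) := by
        have h3 := summable_shift j (k+1) 0 0
        simp only [add_zero] at h3
        have hsum0' := hsum0
        have : (∑' q : ℤ, (sg q * (Bc (2*j) (j + q) * Bc (2*k) (k + q + 1))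
              + sg q * (Bc (2*j) (j + q) * Bc (2*k) (k + q + -1))))
            = ∑' q : ℤ, (sg q * (Bc (2*j) (j + q) * Bc (2 * (k+1)) ((k+1:ℕ) + q))
              - 2 * (sg q * (Bc (2*j) (j + q) * Bc (2*k) (k + q)))) := by
          congr 1; funext q
          rw [show sg q * (Bc (2*j) (j + q) * Bc (2*k) (k + q + 1))
              + sg q * (Bc (2*j) (j + q) * Bc (2*k) (k + q + -1))
              = sg q * (Bc (2*j) (j + q) * (Bc (2*k) (k + q + 1) + Bc (2*k) (k + q + -1)))
            by ring, key q]
          ring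
        rw [this, Summable.tsum_sub h3 (hsum0.mul_left 2), tsum_mul_left, U, U]
        ring

lemma U_zero (k : ℕ) : U 0 k = ((2 * k).choose k : ℝ) := by
  rw [U, tsum_eq_single 0]
  · simp [sg, Bc]
  · intro q hq
    rcases lt_trichotomy q 0 with h | h | h
    · rw [Bc_zero_of_neg (by omega : (0:ℕ) + q < 0)]; ring
    · exact absurd h hq
    · have : Bc (2 * 0) ((0:ℕ) + q) = 0 := by
        simp only [Bc, Nat.mul_zero, Nat.cast_ofNat]
        rw [if_pos (by omega)]
        rw [Nat.choose_eq_zero_of_lt (by omega)]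
        simp
      rw [this]; ring

lemma U_closed (j k : ℕ) :
    U j k = (Nat.factorial (2*j) : ℝ) * Nat.factorial (2*k) / (Nat.factorial (j) * Nat.factorial (k) * Nat.factorial ((j+k))) := by
  induction j generalizing k with
  | zero =>
      rw [U_zero, Nat.cast_choose ℝ (by omega : k ≤ 2 * k),
        show 2 * k - k = k by omega, show 2 * 0 = 0 from rfl, Nat.zero_add k]
      simp [Nat.factorial]
  | succ j ih =>
      rw [U_rec, ih, ih]
      have e1 : (Nat.factorial (2*(j+1)) : ℝ) = (2*j+2) * ((2*j+1) * Nat.factorial (2*j)) := by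
        rw [show 2*(j+1) = (2*j+1)+1 by ring, Nat.factorial_succ, Nat.factorial_succ]
        push_cast; ring
      have e2 : (Nat.factorial (2*(k+1)) : ℝ) = (2*k+2) * ((2*k+1) * Nat.factorial (2*k)) := by
        rw [show 2*(k+1) = (2*k+1)+1 by ring, Nat.factorial_succ, Nat.factorial_succ]
        push_cast; ring
      have e3 : (Nat.factorial (j+1) : ℝ) = (j+1) * Nat.factorial (j) := by rw [Nat.factorial_succ]; push_cast; ring
      have e4 : (Nat.factorial (k+1) : ℝ) = (k+1) * Nat.factorial (k) := by rw [Nat.factorial_succ]; push_cast; ring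
      have e5 : (Nat.factorial (j+(k+1)) : ℝ) = (j+k+1) * Nat.factorial ((j+k)) := by
        rw [show j+(k+1) = (j+k)+1 by ring, Nat.factorial_succ]; push_cast; ring
      have e6 : (Nat.factorial ((j+1)+k) : ℝ) = (j+k+1) * Nat.factorial ((j+k)) := by
        rw [show (j+1)+k = (j+k)+1 by ring, Nat.factorial_succ]; push_cast; ring
      rw [e1, e2, e4, e3, e5, e6]
      have n1 : (Nat.factorial (j) : ℝ) ≠ 0 := Nat.cast_ne_zero.mpr (Nat.factorial_ne_zero _)
      have n2 : (Nat.factorial (k) : ℝ) ≠ 0 := Nat.cast_ne_zero.mpr (Nat.factorial_ne_zero _)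
      have n3 : (Nat.factorial ((j+k)) : ℝ) ≠ 0 := Nat.cast_ne_zero.mpr (Nat.factorial_ne_zero _)
      have n4 : ((j:ℝ)+1) ≠ 0 := by positivity
      have n5 : ((k:ℝ)+1) ≠ 0 := by positivity
      have n6 : ((j:ℝ)+k+1) ≠ 0 := by positivity
      field_simp
      ring
lemma sg_abs (q : ℤ) : |sg q| = 1 := by
  rcases Int.units_eq_one_or q.negOnePow with h | h <;> simp [sg, h]

/-- term of the Bessel series for even order `2q`, in the variable `c = x^2/4`. -/
def jt (c : ℝ) (q m : ℕ) : ℝ :=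
  (-1 : ℝ) ^ m * c ^ (m + q) / (Nat.factorial m * Nat.factorial (m + 2 * q))

lemma besselJ_even (q : ℕ) (x : ℝ) : besselJ (2 * q) x = ∑' m : ℕ, jt (x ^ 2 / 4) q m := by
  unfold besselJ jt
  congr 1; funext m
  rw [show 2 * m + 2 * q = 2 * (m + q) by ring, pow_mul, div_pow]
  norm_num

lemma jt_abs (c : ℝ) (hc : 0 ≤ c) (q m : ℕ) :
    |jt c q m| = c ^ (m + q) / (Nat.factorial m * Nat.factorial (m + 2 * q)) := by
  unfold jt
  rw [abs_div, abs_mul, abs_pow, abs_neg, abs_one, one_pow, one_mul,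
    abs_of_nonneg (pow_nonneg hc _), abs_of_nonneg (by positivity)]

lemma jt_abs_le (c : ℝ) (hc : 0 ≤ c) (q m : ℕ) :
    |jt c q m| ≤ c ^ q * (c ^ m / Nat.factorial m) := by
  rw [jt_abs c hc, pow_add, mul_comm (c ^ m), mul_div_assoc]
  have h1 : (Nat.factorial m : ℝ) ≤ Nat.factorial m * Nat.factorial (m + 2 * q) :=
    le_mul_of_one_le_right (Nat.cast_nonneg _)
      (by exact_mod_cast Nat.one_le_iff_ne_zero.mpr (Nat.factorial_ne_zero _))
  gcongr

lemma jt_abs_le' (c : ℝ) (hc : 0 ≤ c) (q m : ℕ) :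
    |jt c q m| ≤ (c ^ q / Nat.factorial (2 * q)) * (c ^ m / Nat.factorial m) := by
  rw [jt_abs c hc, pow_add, div_mul_div_comm, div_le_div_iff₀ (by positivity) (by positivity)]
  have h1 : (Nat.factorial (2 * q) : ℝ) ≤ Nat.factorial (m + 2 * q) :=
    Nat.cast_le.mpr (Nat.factorial_le (by omega))
  have h2 : (0:ℝ) ≤ c ^ m * c ^ q := by positivity
  have h3 : (0:ℝ) < (Nat.factorial m : ℝ) := Nat.cast_pos.mpr (Nat.factorial_pos m)
  nlinarith [mul_nonneg h2 h3.le]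

lemma summable_jt_abs (c : ℝ) (hc : 0 ≤ c) (q : ℕ) : Summable fun m => |jt c q m| :=
  Summable.of_nonneg_of_le (fun _ => abs_nonneg _) (jt_abs_le c hc q)
    ((Real.summable_pow_div_factorial c).mul_left _)

lemma summable_jt (c : ℝ) (hc : 0 ≤ c) (q : ℕ) : Summable (jt c q) :=
  (summable_jt_abs c hc q).of_abs
section params
variable (r s : ℝ)

/-- summand over (q, m, l) -/
def Gf : ℤ × ℕ × ℕ → ℝ := fun x => sg x.1 * (jt r x.1.natAbs x.2.1 * jt s x.1.natAbs x.2.2)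

/-- majorant -/
def Wf : ℤ × ℕ × ℕ → ℝ := fun x =>
  ((r * s) ^ x.1.natAbs / Nat.factorial (2 * x.1.natAbs)) *
    ((r ^ x.2.1 / Nat.factorial x.2.1) * (s ^ x.2.2 / Nat.factorial x.2.2))

variable (hr : 0 ≤ r) (hs : 0 ≤ s)
include hr hs

lemma summable_Wf : Summable (Wf r s) := by
  have h1 : Summable (fun q : ℤ => (r * s) ^ q.natAbs / (Nat.factorial (2 * q.natAbs) : ℝ)) := by
    have hnat : Summable (fun n : ℕ => (r * s) ^ n / (Nat.factorial (2 * n) : ℝ)) := by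
      apply Summable.of_nonneg_of_le (fun n => by positivity)
        (fun n => ?_) (Real.summable_pow_div_factorial (r * s))
      have hf : (Nat.factorial n : ℝ) ≤ Nat.factorial (2 * n) :=
        Nat.cast_le.mpr (Nat.factorial_le (by omega))
      gcongr
    apply Summable.of_nat_of_neg <;> simpa
  have h2 : Summable (fun m : ℕ => r ^ m / (Nat.factorial m : ℝ)) :=
    Real.summable_pow_div_factorial r
  have h3 : Summable (fun l : ℕ => s ^ l / (Nat.factorial l : ℝ)) :=
    Real.summable_pow_div_factorial s
  exact h1.mul_of_nonneg (h2.mul_of_nonneg h3 (fun m => by positivity) (fun l => by positivity))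
    (fun q => by positivity) (fun p => by positivity)

lemma Gf_abs_le : ∀ x, |Gf r s x| ≤ Wf r s x := by
  rintro ⟨q, m, l⟩
  unfold Gf Wf
  simp only [abs_mul, sg_abs, one_mul]
  calc |jt r q.natAbs m| * |jt s q.natAbs l|
      ≤ ((r ^ q.natAbs / Nat.factorial (2 * q.natAbs)) * (r ^ m / Nat.factorial m)) *
        ((s ^ q.natAbs) * (s ^ l / Nat.factorial l)) := by
        apply mul_le_mul (jt_abs_le' r hr _ _) (jt_abs_le s hs _ _) (abs_nonneg _) (by positivity)
    _ = ((r * s) ^ q.natAbs / Nat.factorial (2 * q.natAbs)) *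
        ((r ^ m / Nat.factorial m) * (s ^ l / Nat.factorial l)) := by
        rw [mul_pow]; ring

lemma summable_Gf : Summable (Gf r s) := by
  apply Summable.of_abs
  exact Summable.of_nonneg_of_le (fun _ => abs_nonneg _) (Gf_abs_le r s hr hs)
    (summable_Wf r s hr hs)

lemma prod_eq (a b : ℝ) (hra : r = a ^ 2 / 4) (hsb : s = b ^ 2 / 4) (q : ℕ) :
    besselJ (2 * q) a * besselJ (2 * q) b = ∑' p : ℕ × ℕ, jt r q p.1 * jt s q p.2 := by
  subst hra hsb
  rw [besselJ_even, besselJ_even]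
  exact tsum_mul_tsum_of_summable_norm
    (by simpa [Real.norm_eq_abs] using summable_jt_abs _ hr q)
    (by simpa [Real.norm_eq_abs] using summable_jt_abs _ hs q)

lemma hasSum_fq (a b : ℝ) (hra : r = a ^ 2 / 4) (hsb : s = b ^ 2 / 4) :
    HasSum (fun q : ℤ => sg q * (besselJ (2 * q.natAbs) a * besselJ (2 * q.natAbs) b))
      (∑' x, Gf r s x) := by
  apply (summable_Gf r s hr hs).hasSum.prod_fiberwise
  intro q
  rw [prod_eq r s hr hs a b hra hsb]
  exact ((summable_mul_of_summable_norm
    (by simpa [Real.norm_eq_abs] using summable_jt_abs _ (hra ▸ hr) q.natAbs)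
    (by simpa [Real.norm_eq_abs] using summable_jt_abs _ (hsb ▸ hs) q.natAbs)).hasSum.mul_left
    (sg q))

lemma lhs_eq (a b : ℝ) (hra : r = a ^ 2 / 4) (hsb : s = b ^ 2 / 4) :
    besselJ 0 a * besselJ 0 b +
        2 * ∑' q : ℕ, (-1 : ℝ) ^ (q + 1) * besselJ (2 * (q + 1)) a * besselJ (2 * (q + 1)) b
      = ∑' x, Gf r s x := by
  set f : ℤ → ℝ := fun q => sg q * (besselJ (2 * q.natAbs) a * besselJ (2 * q.natAbs) b) with hf
  have hsum : HasSum f (∑' x, Gf r s x) := hasSum_fq r s hr hs a b hra hsb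
  have hpos : Summable (fun n : ℕ => f (n + 1)) :=
    hsum.summable.comp_injective (fun x y h => by omega)
  have hneg : (fun n : ℕ => f (-(n + 1))) = fun n : ℕ => f (n + 1) := by
    funext n
    simp only [hf, sg_neg, Int.natAbs_neg]
  have h0 : ∑' q : ℤ, f q = (∑' n : ℕ, f (n + 1)) + f 0 + ∑' n : ℕ, f (-(n + 1)) :=
    tsum_of_add_one_of_neg_add_one hpos (hneg ▸ hpos)
  have hfval : ∀ n : ℕ, f ((n : ℤ) + 1)
      = (-1 : ℝ) ^ (n + 1) * besselJ (2 * (n + 1)) a * besselJ (2 * (n + 1)) b := by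
    intro n
    have h1 : ((n : ℤ) + 1) = ((n + 1 : ℕ) : ℤ) := by push_cast; ring
    simp only [hf, h1, Int.natAbs_natCast, sg_natCast]
    ring
  have hf0 : f 0 = besselJ 0 a * besselJ 0 b := by
    simp [hf, sg, Bc]
  rw [hsum.tsum_eq] at h0
  rw [h0, hneg, hf0]
  have : (∑' n : ℕ, f ((n : ℤ) + 1))
      = ∑' q : ℕ, (-1 : ℝ) ^ (q + 1) * besselJ (2 * (q + 1)) a * besselJ (2 * (q + 1)) b := by
    congr 1; funext n; exact hfval n
  rw [this]; ring

end params

lemma Bval_pos (m n : ℕ) :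
    Bc (2 * (m + n)) (((m + n : ℕ) : ℤ) + (n : ℤ))
      = (Nat.factorial (2 * (m + n)) : ℝ) / (Nat.factorial m * Nat.factorial (m + 2 * n)) := by
  rw [show ((m + n : ℕ) : ℤ) + (n : ℤ) = ((m + 2 * n : ℕ) : ℤ) by push_cast; ring]
  have h0 : (0 : ℤ) ≤ ((m + 2 * n : ℕ) : ℤ) := Int.natCast_nonneg _
  rw [Bc, if_pos h0, Int.toNat_natCast]
  rw [Nat.cast_choose ℝ (by omega : m + 2 * n ≤ 2 * (m + n)), show 2 * (m + n) - (m + 2 * n) = m by omega]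
  rw [mul_comm ((Nat.factorial (m + 2 * n) : ℝ))]

lemma Bval_neg (m n : ℕ) :
    Bc (2 * (m + n)) (((m + n : ℕ) : ℤ) + -(n : ℤ))
      = (Nat.factorial (2 * (m + n)) : ℝ) / (Nat.factorial m * Nat.factorial (m + 2 * n)) := by
  rw [show ((m + n : ℕ) : ℤ) + -(n : ℤ) = ((m : ℕ) : ℤ) by push_cast; ring]
  have h0 : (0 : ℤ) ≤ ((m : ℕ) : ℤ) := Int.natCast_nonneg _
  rw [Bc, if_pos h0, Int.toNat_natCast]
  rw [Nat.cast_choose ℝ (by omega : m ≤ 2 * (m + n)), show 2 * (m + n) - m = m + 2 * n by omega]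

section params2
variable (r s : ℝ)

def Ff : ℤ × ℕ × ℕ → ℝ := fun x =>
  ((-1 : ℝ) ^ (x.2.1 + x.2.2) * r ^ x.2.1 * s ^ x.2.2 /
      (Nat.factorial (2 * x.2.1) * Nat.factorial (2 * x.2.2))) *
    (sg x.1 * (Bc (2 * x.2.1) (x.2.1 + x.1) * Bc (2 * x.2.2) (x.2.2 + x.1)))

def Hf : ℕ × ℕ → ℝ := fun p =>
  (-1 : ℝ) ^ (p.1 + p.2) * r ^ p.1 * s ^ p.2 /
    (Nat.factorial p.1 * Nat.factorial p.2 * Nat.factorial (p.1 + p.2))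

def phim : ℤ × ℕ × ℕ → ℤ × ℕ × ℕ := fun x => (x.1, x.2.1 + x.1.natAbs, x.2.2 + x.1.natAbs)

lemma phim_inj : Function.Injective phim := by
  rintro ⟨q, m, l⟩ ⟨q', m', l'⟩ h
  simp only [phim, Prod.mk.injEq] at h
  obtain ⟨h1, h2, h3⟩ := h
  subst h1
  have hm : m = m' := by omega
  have hl : l = l' := by omega
  rw [hm, hl]

lemma Ff_comp : ∀ x, Ff r s (phim x) = Gf r s x := by
  rintro ⟨q, m, l⟩
  have hfac : ∀ t : ℕ, ((Nat.factorial t : ℝ)) ≠ 0 :=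
    fun t => Nat.cast_ne_zero.mpr (Nat.factorial_ne_zero _)
  rcases Int.natAbs_eq q with hq | hq
  · simp only [Ff, Gf, phim, jt]
    set n := q.natAbs with hn
    rw [hq, Bval_pos m n, Bval_pos l n,
      show (m + n) + (l + n) = (m + l) + 2 * n by ring, pow_add, pow_mul, neg_one_sq, one_pow,
      mul_one, pow_add]
    field_simp
  · simp only [Ff, Gf, phim, jt]
    set n := q.natAbs with hn
    rw [hq, Bval_neg m n, Bval_neg l n,
      show (m + n) + (l + n) = (m + l) + 2 * n by ring, pow_add, pow_mul, neg_one_sq, one_pow,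
      mul_one, pow_add]
    field_simp

lemma Ff_zero_off : ∀ x ∉ Set.range (phim), Ff r s x = 0 := by
  rintro ⟨q, j, k⟩ hx
  by_cases h1 : q.natAbs ≤ j ∧ q.natAbs ≤ k
  · exact absurd ⟨(q, j - q.natAbs, k - q.natAbs), by
      simp only [phim, Prod.mk.injEq]
      refine ⟨trivial, by omega, by omega⟩⟩ hx
  · have : Bc (2 * j) ((j : ℤ) + q) = 0 ∨ Bc (2 * k) ((k : ℤ) + q) = 0 := by
      rcases not_and_or.mp h1 with h | h
      · left
        rcases lt_or_ge q 0 with hq | hq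
        · exact Bc_zero_of_neg (by omega)
        · exact Bc_zero_of_gt (by push_cast; omega)
      · right
        rcases lt_or_ge q 0 with hq | hq
        · exact Bc_zero_of_neg (by omega)
        · exact Bc_zero_of_gt (by push_cast; omega)
    rcases this with h | h <;> simp [Ff, h]

variable (hr : 0 ≤ r) (hs : 0 ≤ s)
include hr hs

lemma hasSum_Ff : HasSum (Ff r s) (∑' x, Gf r s x) := by
  refine (Function.Injective.hasSum_iff (phim_inj) (Ff_zero_off r s)).mp ?_
  have : (Ff r s) ∘ phim = Gf r s := funext (Ff_comp r s)
  rw [this]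
  exact (summable_Gf r s hr hs).hasSum

omit hr hs in
lemma inner_q_sum (j k : ℕ) :
    (∑' q : ℤ, Ff r s (q, (j, k)))
      = (-1 : ℝ) ^ (j + k) * r ^ j * s ^ k /
          (Nat.factorial j * Nat.factorial k * Nat.factorial (j + k)) := by
  have : (fun q : ℤ => Ff r s (q, (j, k)))
      = fun q : ℤ => ((-1 : ℝ) ^ (j + k) * r ^ j * s ^ k /
          (Nat.factorial (2 * j) * Nat.factorial (2 * k))) *
        (sg q * (Bc (2 * j) (j + q) * Bc (2 * k) (k + q))) := rfl
  rw [this, tsum_mul_left, ← U, U_closed]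
  have hfac : ∀ t : ℕ, ((Nat.factorial t : ℝ)) ≠ 0 :=
    fun t => Nat.cast_ne_zero.mpr (Nat.factorial_ne_zero _)
  field_simp

lemma sum_Ff_eq : (∑' x, Ff r s x) = ∑' p : ℕ × ℕ, Hf r s p := by
  have hFf := hasSum_Ff r s hr hs
  have hcomm : (∑' x, Ff r s x) = ∑' p : (ℕ × ℕ) × ℤ, Ff r s (p.2, p.1) := by
    exact ((Equiv.prodComm (ℕ × ℕ) ℤ).tsum_eq (Ff r s)).symm
  have hsum2 : Summable (fun p : (ℕ × ℕ) × ℤ => Ff r s (p.2, p.1)) :=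
    (Equiv.prodComm (ℕ × ℕ) ℤ).summable_iff.mpr hFf.summable
  rw [hcomm, Summable.tsum_prod' hsum2 (fun b => hsum2.prod_factor b)]
  congr 1
  funext p
  exact (inner_q_sum r s p.1 p.2).trans rfl

lemma summable_Hf : Summable (Hf r s) := by
  apply Summable.of_abs
  refine Summable.of_nonneg_of_le (fun _ => abs_nonneg _) ?_
    ((Real.summable_pow_div_factorial r).mul_of_nonneg
      (Real.summable_pow_div_factorial s) (fun m => by positivity) (fun l => by positivity))
  · rintro ⟨j, k⟩
    have h1 : (1 : ℝ) ≤ Nat.factorial (j + k) := by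
      exact_mod_cast Nat.one_le_iff_ne_zero.mpr (Nat.factorial_ne_zero _)
    have habs : |Hf r s (j, k)| = r ^ j * s ^ k /
        (Nat.factorial j * Nat.factorial k * Nat.factorial (j + k)) := by
      unfold Hf
      rw [abs_div, abs_mul, abs_mul, abs_pow, abs_neg, abs_one, one_pow, one_mul,
        abs_of_nonneg (pow_nonneg hr _), abs_of_nonneg (pow_nonneg hs _),
        abs_of_nonneg (by positivity)]
    rw [habs, div_mul_div_comm]
    have hp : (0:ℝ) ≤ (Nat.factorial j : ℝ) * Nat.factorial k := by positivity
    have h2 : (Nat.factorial j * Nat.factorial k : ℝ)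
        ≤ Nat.factorial j * Nat.factorial k * Nat.factorial (j + k) :=
      le_mul_of_one_le_right hp h1
    gcongr

omit hr hs in
lemma antidiag_sum (n : ℕ) :
    (∑ p ∈ Finset.HasAntidiagonal.antidiagonal n, Hf r s p)
      = (-1 : ℝ) ^ n * (r + s) ^ n / (Nat.factorial n * Nat.factorial n) := by
  rw [Finset.Nat.sum_antidiagonal_eq_sum_range_succ_mk, add_pow, mul_div_assoc,
    Finset.sum_div, Finset.mul_sum]
  apply Finset.sum_congr rfl
  intro i hi
  have hin : i ≤ n := by
    simp only [Finset.mem_range] at hi; omega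
  unfold Hf
  simp only
  rw [show i + (n - i) = n by omega, Nat.cast_choose ℝ hin]
  have hfac : ∀ t : ℕ, ((Nat.factorial t : ℝ)) ≠ 0 :=
    fun t => Nat.cast_ne_zero.mpr (Nat.factorial_ne_zero _)
  field_simp

lemma sum_Hf_eq : (∑' p : ℕ × ℕ, Hf r s p)
    = ∑' n : ℕ, (-1 : ℝ) ^ n * (r + s) ^ n / (Nat.factorial n * Nat.factorial n) := by
  have hsig : Summable (fun x : Σ n : ℕ, Finset.HasAntidiagonal.antidiagonal n =>
      Hf r s (Finset.HasAntidiagonal.sigmaAntidiagonalEquivProd x)) :=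
    (Finset.HasAntidiagonal.sigmaAntidiagonalEquivProd (A := ℕ)).summable_iff.mpr (summable_Hf r s hr hs)
  rw [← Finset.HasAntidiagonal.sigmaAntidiagonalEquivProd.tsum_eq (Hf r s), Summable.tsum_sigma hsig]
  congr 1
  funext n
  have : (∑' p : Finset.HasAntidiagonal.antidiagonal n, Hf r s
      (Finset.HasAntidiagonal.sigmaAntidiagonalEquivProd ⟨n, p⟩)) = ∑' p : Finset.HasAntidiagonal.antidiagonal n, Hf r s p := rfl
  rw [this, Finset.tsum_subtype (Finset.HasAntidiagonal.antidiagonal n) (Hf r s), antidiag_sum r s n]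

end params2

lemma besselJ_zero_eq (x : ℝ) :
    besselJ 0 x = ∑' n : ℕ, (-1 : ℝ) ^ n * (x ^ 2 / 4) ^ n /
      (Nat.factorial n * Nat.factorial n) := by
  have h : besselJ 0 x = besselJ (2 * 0) x := by norm_num
  rw [h, besselJ_even]
  exact tsum_congr fun m => by simp [jt]

theorem graf_type_identity (a b : ℝ) :
    besselJ 0 a * besselJ 0 b +
        2 * ∑' q : ℕ,
          (-1 : ℝ) ^ (q + 1) * besselJ (2 * (q + 1)) a * besselJ (2 * (q + 1)) b =
      besselJ 0 (Real.sqrt (a ^ 2 + b ^ 2)) := by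
  have hr : (0:ℝ) ≤ a ^ 2 / 4 := by positivity
  have hs : (0:ℝ) ≤ b ^ 2 / 4 := by positivity
  rw [lhs_eq (a ^ 2 / 4) (b ^ 2 / 4) hr hs a b rfl rfl,
    (hasSum_Ff (a ^ 2 / 4) (b ^ 2 / 4) hr hs).tsum_eq.symm,
    sum_Ff_eq (a ^ 2 / 4) (b ^ 2 / 4) hr hs,
    sum_Hf_eq (a ^ 2 / 4) (b ^ 2 / 4) hr hs, besselJ_zero_eq]
  rw [Real.sq_sqrt (by positivity)]
  congr 1
  funext n
  ring_nf


end GrafAux
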